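/- (Multiplier estimate with scaling) Let θ₀ ≥ 0, θ_∞ ∈ ℝ, and g: ℝ → ℂ satisfy |g(k)| ≤ C·min(|k|^{θ₀}, (1+|k|)^{θ_∞}). Let g_op be the Fourier multiplier operator with symbol g. Suppose μ₁ = μ₂ ≥ 0 and m₂ − m₁ ≥ max(θ₀, θ_∞). Then there is C' > 0 such that for all ε ∈ (0,1) and all A ∈ H^∞_{μ₂, m₂}, ‖g_op (A(ε·))‖_{H^∞_{μ₁/ε, m₁}} ≤ C' ε^{θ₀ − 1/2} ‖A‖_{H^∞_{μ₂, m₂}}. -/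

import Mathlib

open MeasureTheory

/-- Fourier transform of a complex-valued function on `ℝ`. -/
noncomputable def FT (u : ℝ → ℂ) : ℝ → ℂ := FourierTransform.fourier u

/-- Membership in the weighted space `H^∞_{μ,s}`. -/
def memH (μ s : ℝ) (u : ℝ → ℂ) : Prop :=
  MemLp u 2 volume ∧
  MemLp (fun k : ℝ => ((Real.exp (μ * |k|) * (1 + k ^ 2) ^ (s / 2) : ℝ) : ℂ) * FT u k) 2 volume

/-- The norm of the weighted space `H^∞_{μ,s}`. -/
noncomputable def Hnorm (μ s : ℝ) (u : ℝ → ℂ) : ℝ :=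
  (∫ k : ℝ, ‖FT u k‖ ^ 2 * Real.exp (2 * μ * |k|) * (1 + k ^ 2) ^ s) ^ ((1 : ℝ) / 2)

/-- The Fourier multiplier operator with symbol `g`. -/
noncomputable def multOp (g : ℝ → ℂ) (u : ℝ → ℂ) : ℝ → ℂ :=
  FourierTransformInv.fourierInv (fun k => g k * FT u k)

open Real Complex FourierTransform RealInnerProductSpace SchwartzMap
open scoped ContDiff ENNReal

namespace Stmt14Aux

lemma ft_zero_of_not_integrable {f : ℝ → ℂ} (hf : ¬ Integrable f) (k : ℝ) :
    𝓕 f k = 0 := by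
  rw [Real.fourier_eq]
  refine integral_undef fun h => hf ?_
  exact (Real.fourierIntegral_convergent_iff k).1 h

lemma ftInv_zero_of_not_integrable {f : ℝ → ℂ} (hf : ¬ Integrable f) (k : ℝ) :
    𝓕⁻ f k = 0 := by
  rw [Real.fourierInv_eq_fourier_neg]
  exact ft_zero_of_not_integrable hf (-k)

lemma ft_scale (A : ℝ → ℂ) {ε : ℝ} (hε : 0 < ε) (k : ℝ) :
    𝓕 (fun x => A (ε * x)) k
      = (ε⁻¹ : ℝ) • 𝓕 A (k / ε) := by
  rw [Real.fourier_real_eq, Real.fourier_real_eq]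
  have h := MeasureTheory.Measure.integral_comp_mul_left
      (fun y => 𝐞 (-(y * (k / ε))) • A y) ε
  rw [abs_of_pos (inv_pos.2 hε)] at h
  rw [← h]
  have h2 : ∀ x : ℝ, 𝐞 (-(x * k)) • A (ε * x) = 𝐞 (-(ε * x * (k / ε))) • A (ε * x) := by
    intro x
    have : ε * x * (k / ε) = x * k := by field_simp
    rw [this]
  simp_rw [h2]

lemma mul_formula {f h : ℝ → ℂ} (hf : Integrable f) (hh : Integrable h) :
    ∫ ξ, 𝓕 f ξ * h ξ = ∫ x, f x * 𝓕 h x := by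
  have := VectorFourier.integral_fourierIntegral_smul_eq_flip (V := ℝ) (W := ℝ) (F := ℂ)
      (μ := volume) (ν := volume) (L := innerₗ ℝ) Real.continuous_fourierChar
      continuous_inner hf hh
  simp only [flip_innerₗ, smul_eq_mul] at this
  exact this

lemma exists_schwartz {φ : ℝ → ℝ} (hφ : ContDiff ℝ ∞ φ) (hs : HasCompactSupport φ) :
    ∃ φS : SchwartzMap ℝ ℂ, ⇑φS = fun x => (φ x : ℂ) := by
  have hc : ContDiff ℝ ∞ (fun x => (φ x : ℂ)) := Complex.ofRealCLM.contDiff.comp hφ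
  have hsc : HasCompactSupport (fun x : ℝ => (φ x : ℂ)) :=
    hs.comp_left (g := fun r : ℝ => (r : ℂ)) (by simp)
  refine ⟨⟨fun x => (φ x : ℂ), hc, fun k n => ?_⟩, rfl⟩
  have hder : HasCompactSupport (iteratedFDeriv ℝ n (fun x : ℝ => (φ x : ℂ))) :=
    hsc.iteratedFDeriv n
  have hcont : Continuous fun x : ℝ =>
      ‖x‖ ^ k * ‖iteratedFDeriv ℝ n (fun x : ℝ => (φ x : ℂ)) x‖ :=
    (continuous_norm.pow k).mul (hc.continuous_iteratedFDeriv (by exact_mod_cast le_top)).norm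
  have hsupp : HasCompactSupport fun x : ℝ =>
      ‖x‖ ^ k * ‖iteratedFDeriv ℝ n (fun x : ℝ => (φ x : ℂ)) x‖ :=
    (hder.norm).mul_left
  obtain ⟨M, hM⟩ := hsupp.exists_bound_of_continuous hcont
  exact ⟨M, fun x => le_trans (Real.le_norm_self _) (hM x)⟩

lemma ft_ftInv_ae {G : ℝ → ℂ} (hG : Integrable G)
    (hv : Integrable (𝓕⁻ G)) :
    𝓕 (𝓕⁻ G) =ᵐ[volume] G := by
  have hvc : Continuous (𝓕 (𝓕⁻ G)) :=
    VectorFourier.fourierIntegral_continuous Real.continuous_fourierChar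
      continuous_inner hv
  refine ae_eq_of_integral_contDiff_smul_eq (hvc.locallyIntegrable) hG.locallyIntegrable ?_
  intro φ hφ hφs
  obtain ⟨φS, hφS⟩ := exists_schwartz hφ hφs
  have hφint : Integrable (fun x => (φ x : ℂ)) := by rw [← hφS]; exact φS.integrable
  set ψS := (FourierTransform.fourierCLE ℂ 𝓢(ℝ, ℂ)).symm φS with hψdef
  have hψ : ⇑ψS = 𝓕⁻ (fun x => (φ x : ℂ)) := by
    rw [hψdef, FourierTransform.fourierCLE_symm_apply, SchwartzMap.fourierInv_coe, hφS]
  have hFTψ : 𝓕 ⇑ψS = fun x => (φ x : ℂ) := by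
    have h1 : (FourierTransform.fourierCLE ℂ 𝓢(ℝ, ℂ)) ψS = φS :=
      (FourierTransform.fourierCLE ℂ 𝓢(ℝ, ℂ)).apply_symm_apply φS
    calc 𝓕 ⇑ψS = ⇑((FourierTransform.fourierCLE ℂ 𝓢(ℝ, ℂ)) ψS) :=
          by rw [FourierTransform.fourierCLE_apply, SchwartzMap.fourier_coe]
      _ = ⇑φS := by rw [h1]
      _ = fun x => (φ x : ℂ) := hφS
  calc ∫ x, φ x • 𝓕 (𝓕⁻ G) x
      = ∫ x, 𝓕 (𝓕⁻ G) x * (φ x : ℂ) := by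
        simp [Complex.real_smul, mul_comm]
    _ = ∫ x, (𝓕⁻ G) x * 𝓕 (fun x => (φ x : ℂ)) x :=
        mul_formula hv hφint
    _ = ∫ y, 𝓕 G y *
          𝓕 (fun x => (φ x : ℂ)) (-y) := by
        rw [← integral_neg_eq_self (fun y : ℝ => 𝓕 G y *
          𝓕 (fun x => (φ x : ℂ)) (-y)) volume]
        congr 1 with x
        rw [Real.fourierInv_eq_fourier_neg]
        simp
    _ = ∫ y, 𝓕 G y * ψS y := by
        congr 1 with y
        rw [hψ, Real.fourierInv_eq_fourier_neg]
    _ = ∫ k, G k * 𝓕 ⇑ψS k := mul_formula hG ψS.integrable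
    _ = ∫ x, φ x • G x := by
        rw [hFTψ]
        congr 1 with k
        simp [Complex.real_smul, mul_comm]

end Stmt14Aux

open Stmt14Aux

theorem stmt_14 (θ₀ θinf C : ℝ) (hθ₀ : 0 ≤ θ₀) (hC : 0 < C)
    (g : ℝ → ℂ)
    (hg : ∀ k : ℝ, ‖g k‖ ≤ C * min (|k| ^ θ₀) ((1 + |k|) ^ θinf))
    (μ₁ μ₂ m₁ m₂ : ℝ) (hμ : μ₁ = μ₂) (hμ₂ : 0 ≤ μ₂) (hm₁ : 0 ≤ m₁) (hm₂ : 0 ≤ m₂)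
    (hm : m₂ - m₁ ≥ max θ₀ θinf) :
    ∃ C' > 0, ∀ ε : ℝ, 0 < ε → ε < 1 → ∀ A : ℝ → ℂ, memH μ₂ m₂ A →
      Hnorm (μ₁ / ε) m₁ (multOp g (fun x => A (ε * x))) ≤
        C' * ε ^ (θ₀ - 1 / 2) * Hnorm μ₂ m₂ A := by
  subst hμ
  refine ⟨C, hC, ?_⟩
  intro ε hε hε1 A hA
  set u : ℝ → ℂ := fun x => A (ε * x) with hu
  set G : ℝ → ℂ := fun k => g k * FT u k with hGdef
  -- nonnegativity of the right hand side
  have hIH0 : 0 ≤ ∫ k : ℝ, ‖FT A k‖ ^ 2 * Real.exp (2 * μ₁ * |k|) * (1 + k ^ 2) ^ m₂ :=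
    integral_nonneg fun k => by positivity
  have hHnormA : 0 ≤ Hnorm μ₁ m₂ A := Real.rpow_nonneg hIH0 _
  have hRHS : 0 ≤ C * ε ^ (θ₀ - 1 / 2) * Hnorm μ₁ m₂ A := by positivity
  -- the zero case helper
  have hzero : (∀ k : ℝ, FT (multOp g u) k = 0) →
      Hnorm (μ₁ / ε) m₁ (multOp g u) ≤ C * ε ^ (θ₀ - 1 / 2) * Hnorm μ₁ m₂ A := by
    intro hz
    unfold Hnorm
    have hfz : (fun k : ℝ => ‖FT (multOp g u) k‖ ^ 2 * Real.exp (2 * (μ₁ / ε) * |k|)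
        * (1 + k ^ 2) ^ m₁) = fun _ : ℝ => (0:ℝ) := by
      funext k
      rw [hz k]
      simp
    rw [hfz, integral_zero, Real.zero_rpow (by norm_num)]
    exact hRHS
  by_cases hG : Integrable G
  · by_cases hv : Integrable (multOp g u)
    · -- main case
      have hae : FT (multOp g u) =ᵐ[volume] G := ft_ftInv_ae hG hv
      -- the weighted integrability of FT A
      have hH : Integrable
          (fun k : ℝ => ‖FT A k‖ ^ 2 * Real.exp (2 * μ₁ * |k|) * (1 + k ^ 2) ^ m₂) := by
        have h := hA.2.integrable_norm_rpow two_ne_zero ENNReal.ofNat_ne_top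
        have h2' : ((2:ℝ≥0∞).toReal) = ((2:ℕ):ℝ) := by norm_num
        rw [h2'] at h
        simp only [Real.rpow_natCast] at h
        refine h.congr (ae_of_all _ fun k => ?_)
        have h1 : (0:ℝ) < 1 + k ^ 2 := by positivity
        have h2 : (0:ℝ) ≤ Real.exp (μ₁ * |k|) * (1 + k ^ 2) ^ (m₂ / 2) := by positivity
        have e1 : Real.exp (μ₁ * |k|) ^ 2 = Real.exp (2 * μ₁ * |k|) := by
          rw [show (2:ℝ) * μ₁ * |k| = ((2:ℕ):ℝ) * (μ₁ * |k|) by push_cast; ring,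
            Real.exp_nat_mul]
        have e2 : ((1 + k ^ 2) ^ (m₂ / 2)) ^ (2:ℕ) = (1 + k ^ 2) ^ m₂ := by
          rw [← Real.rpow_natCast ((1 + k ^ 2) ^ (m₂ / 2)) 2, ← Real.rpow_mul h1.le]
          norm_num
        show ‖_ * FT A k‖ ^ (2:ℕ) = _
        rw [norm_mul, Complex.norm_real, Real.norm_eq_abs,
          _root_.abs_of_nonneg h2, mul_pow, mul_pow, e1, e2]
        ring
      -- pointwise bound after scaling
      have hscale : ∀ κ : ℝ, ‖FT u (ε * κ)‖ = ε⁻¹ * ‖FT A κ‖ := by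
        intro κ
        have hts := ft_scale A hε (ε * κ)
        rw [show ε * κ / ε = κ by field_simp] at hts
        show ‖𝓕 (fun x => A (ε * x)) (ε * κ)‖ = _
        rw [hts, norm_smul, Real.norm_eq_abs, abs_of_pos (inv_pos.2 hε)]
        rfl
      have hptwise : ∀ κ : ℝ,
          ‖G (ε * κ)‖ ^ 2 * Real.exp (2 * (μ₁ / ε) * |ε * κ|) * (1 + (ε * κ) ^ 2) ^ m₁ ≤
          C ^ 2 * ε ^ (2 * θ₀ - 2) *
            (‖FT A κ‖ ^ 2 * Real.exp (2 * μ₁ * |κ|) * (1 + κ ^ 2) ^ m₂) := by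
        intro κ
        have h1 : (0:ℝ) < 1 + κ ^ 2 := by positivity
        -- bound on ‖g (ε κ)‖
        have hgb : ‖g (ε * κ)‖ ≤ C * ε ^ θ₀ * (1 + κ ^ 2) ^ ((m₂ - m₁) / 2) := by
          calc ‖g (ε * κ)‖ ≤ C * min (|ε * κ| ^ θ₀) ((1 + |ε * κ|) ^ θinf) := hg (ε * κ)
            _ ≤ C * |ε * κ| ^ θ₀ := by
                exact mul_le_mul_of_nonneg_left (min_le_left _ _) hC.le
            _ = C * (ε ^ θ₀ * |κ| ^ θ₀) := by
                rw [abs_mul, abs_of_pos hε, Real.mul_rpow hε.le (abs_nonneg κ)]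
            _ ≤ C * (ε ^ θ₀ * (1 + κ ^ 2) ^ ((m₂ - m₁) / 2)) := by
                have hk : |κ| ^ θ₀ ≤ (1 + κ ^ 2) ^ ((m₂ - m₁) / 2) := by
                  have s1 : |κ| ^ θ₀ = (κ ^ 2) ^ (θ₀ / 2) := by
                    rw [← _root_.sq_abs, ← Real.rpow_natCast |κ| 2, ← Real.rpow_mul (abs_nonneg κ)]
                    congr 1
                    push_cast
                    ring
                  have s2 : (κ ^ 2 : ℝ) ^ (θ₀ / 2) ≤ (1 + κ ^ 2) ^ (θ₀ / 2) :=
                    Real.rpow_le_rpow (by positivity) (by linarith) (by linarith)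
                  have s3 : (1 + κ ^ 2 : ℝ) ^ (θ₀ / 2) ≤ (1 + κ ^ 2) ^ ((m₂ - m₁) / 2) := by
                    apply Real.rpow_le_rpow_of_exponent_le (by nlinarith [sq_nonneg κ])
                    have := le_trans (le_max_left θ₀ θinf) hm
                    linarith
                  rw [s1]; exact le_trans s2 s3
                exact mul_le_mul_of_nonneg_left
                  (mul_le_mul_of_nonneg_left hk (Real.rpow_nonneg hε.le _)) hC.le
            _ = C * ε ^ θ₀ * (1 + κ ^ 2) ^ ((m₂ - m₁) / 2) := by ring
        -- the norm of G at ε κ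
        have hGn : ‖G (ε * κ)‖ = ‖g (ε * κ)‖ * (ε⁻¹ * ‖FT A κ‖) := by
          rw [hGdef]
          show ‖g (ε * κ) * FT u (ε * κ)‖ = _
          rw [norm_mul, hscale κ]
        -- exponential weight transforms exactly
        have hexp : Real.exp (2 * (μ₁ / ε) * |ε * κ|) = Real.exp (2 * μ₁ * |κ|) := by
          rw [abs_mul, abs_of_pos hε]
          congr 1
          field_simp
        -- polynomial weight bound
        have hpoly : (1 + (ε * κ) ^ 2 : ℝ) ^ m₁ ≤ (1 + κ ^ 2) ^ m₁ := by
          apply Real.rpow_le_rpow (by positivity) _ hm₁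
          have hε2 : ε ^ 2 ≤ 1 := by nlinarith
          have h3 : (ε * κ) ^ 2 ≤ κ ^ 2 := by
            rw [mul_pow]
            nlinarith [sq_nonneg κ]
          linarith
        -- assemble
        have hb : ‖G (ε * κ)‖ ≤ (C * ε ^ θ₀ * (1 + κ ^ 2) ^ ((m₂ - m₁) / 2)) *
            (ε⁻¹ * ‖FT A κ‖) := by
          rw [hGn]
          apply mul_le_mul_of_nonneg_right hgb (by positivity)
        have hb2 : ‖G (ε * κ)‖ ^ 2 ≤ (C * ε ^ θ₀ * (1 + κ ^ 2) ^ ((m₂ - m₁) / 2)) ^ 2 *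
            (ε⁻¹ * ‖FT A κ‖) ^ 2 := by
          rw [← mul_pow]
          exact pow_le_pow_left₀ (norm_nonneg _) hb 2
        rw [hexp]
        calc ‖G (ε * κ)‖ ^ 2 * Real.exp (2 * μ₁ * |κ|) * (1 + (ε * κ) ^ 2) ^ m₁
            ≤ ((C * ε ^ θ₀ * (1 + κ ^ 2) ^ ((m₂ - m₁) / 2)) ^ 2 * (ε⁻¹ * ‖FT A κ‖) ^ 2) *
              Real.exp (2 * μ₁ * |κ|) * (1 + κ ^ 2) ^ m₁ := by
              have e0 : (0:ℝ) < Real.exp (2 * μ₁ * |κ|) := Real.exp_pos _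
              have p0 : (0:ℝ) ≤ (1 + (ε * κ) ^ 2) ^ m₁ := by positivity
              have q0 : (0:ℝ) ≤ (1 + κ ^ 2) ^ m₁ := by positivity
              apply mul_le_mul _ hpoly p0 (by positivity)
              exact mul_le_mul_of_nonneg_right hb2 e0.le
          _ = C ^ 2 * ε ^ (2 * θ₀ - 2) *
              (‖FT A κ‖ ^ 2 * Real.exp (2 * μ₁ * |κ|) * (1 + κ ^ 2) ^ m₂) := by
              have r1 : (ε ^ θ₀ : ℝ) ^ 2 * (ε⁻¹) ^ 2 = ε ^ (2 * θ₀ - 2) := by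
                have a1 : (ε ^ θ₀ : ℝ) ^ (2:ℕ) = ε ^ (θ₀ * 2) := by
                  rw [← Real.rpow_natCast (ε ^ θ₀) 2, ← Real.rpow_mul hε.le]
                  norm_num
                have a2 : (ε⁻¹ : ℝ) ^ (2:ℕ) = ε ^ (-2 : ℝ) := by
                  rw [← Real.rpow_neg_one ε, ← Real.rpow_natCast (ε ^ (-1:ℝ)) 2,
                    ← Real.rpow_mul hε.le]
                  norm_num
                rw [a1, a2, ← Real.rpow_add hε]
                congr 1
                ring
              have r2 : ((1 + κ ^ 2 : ℝ) ^ ((m₂ - m₁) / 2)) ^ 2 * (1 + κ ^ 2) ^ m₁ =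
                  (1 + κ ^ 2) ^ m₂ := by
                rw [← Real.rpow_natCast ((1 + κ ^ 2) ^ ((m₂ - m₁) / 2)) 2,
                  ← Real.rpow_mul h1.le, ← Real.rpow_add h1]
                norm_num
              calc ((C * ε ^ θ₀ * (1 + κ ^ 2) ^ ((m₂ - m₁) / 2)) ^ 2 * (ε⁻¹ * ‖FT A κ‖) ^ 2) *
                  Real.exp (2 * μ₁ * |κ|) * (1 + κ ^ 2) ^ m₁
                  = (C ^ 2 * ((ε ^ θ₀) ^ 2 * (ε⁻¹) ^ 2)) *
                    (‖FT A κ‖ ^ 2 * Real.exp (2 * μ₁ * |κ|) *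
                      (((1 + κ ^ 2) ^ ((m₂ - m₁) / 2)) ^ 2 * (1 + κ ^ 2) ^ m₁)) := by ring
                _ = _ := by rw [r1, r2]
      -- change of variables
      have hcov : (∫ k : ℝ, ‖G k‖ ^ 2 * Real.exp (2 * (μ₁ / ε) * |k|) * (1 + k ^ 2) ^ m₁)
          = ε * ∫ κ : ℝ, ‖G (ε * κ)‖ ^ 2 * Real.exp (2 * (μ₁ / ε) * |ε * κ|) *
              (1 + (ε * κ) ^ 2) ^ m₁ := by
        rw [MeasureTheory.Measure.integral_comp_mul_left
          (fun k : ℝ => ‖G k‖ ^ 2 * Real.exp (2 * (μ₁ / ε) * |k|) * (1 + k ^ 2) ^ m₁) ε,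
          abs_of_pos (inv_pos.2 hε), smul_eq_mul]
        field_simp
      -- monotonicity
      have hmono : (∫ κ : ℝ, ‖G (ε * κ)‖ ^ 2 * Real.exp (2 * (μ₁ / ε) * |ε * κ|) *
              (1 + (ε * κ) ^ 2) ^ m₁)
          ≤ ∫ κ : ℝ, C ^ 2 * ε ^ (2 * θ₀ - 2) *
              (‖FT A κ‖ ^ 2 * Real.exp (2 * μ₁ * |κ|) * (1 + κ ^ 2) ^ m₂) := by
        apply integral_mono_of_nonneg (ae_of_all _ fun κ => by positivity)
          (hH.const_mul _) (ae_of_all _ hptwise)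
      have hconst : (∫ κ : ℝ, C ^ 2 * ε ^ (2 * θ₀ - 2) *
              (‖FT A κ‖ ^ 2 * Real.exp (2 * μ₁ * |κ|) * (1 + κ ^ 2) ^ m₂))
          = C ^ 2 * ε ^ (2 * θ₀ - 2) *
            ∫ κ : ℝ, ‖FT A κ‖ ^ 2 * Real.exp (2 * μ₁ * |κ|) * (1 + κ ^ 2) ^ m₂ :=
        integral_const_mul _ _
      -- the key integral inequality
      set I := ∫ κ : ℝ, ‖FT A κ‖ ^ 2 * Real.exp (2 * μ₁ * |κ|) * (1 + κ ^ 2) ^ m₂ with hI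
      have hkey : (∫ k : ℝ, ‖FT (multOp g u) k‖ ^ 2 * Real.exp (2 * (μ₁ / ε) * |k|) *
            (1 + k ^ 2) ^ m₁) ≤ C ^ 2 * ε ^ (2 * θ₀ - 1) * I := by
        have heq : (∫ k : ℝ, ‖FT (multOp g u) k‖ ^ 2 * Real.exp (2 * (μ₁ / ε) * |k|) *
            (1 + k ^ 2) ^ m₁)
            = ∫ k : ℝ, ‖G k‖ ^ 2 * Real.exp (2 * (μ₁ / ε) * |k|) * (1 + k ^ 2) ^ m₁ :=
          integral_congr_ae (hae.mono fun k hk => by simp only [hk])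
        rw [heq, hcov]
        calc ε * ∫ κ : ℝ, ‖G (ε * κ)‖ ^ 2 * Real.exp (2 * (μ₁ / ε) * |ε * κ|) *
              (1 + (ε * κ) ^ 2) ^ m₁
            ≤ ε * (C ^ 2 * ε ^ (2 * θ₀ - 2) * I) := by
              apply mul_le_mul_of_nonneg_left _ hε.le
              rw [← hconst]; exact hmono
          _ = C ^ 2 * ε ^ (2 * θ₀ - 1) * I := by
              have : ε * ε ^ (2 * θ₀ - 2) = ε ^ (2 * θ₀ - 1) := by
                rw [show (2 * θ₀ - 1 : ℝ) = 1 + (2 * θ₀ - 2) by ring, Real.rpow_add hε,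
                  Real.rpow_one]
              calc ε * (C ^ 2 * ε ^ (2 * θ₀ - 2) * I)
                  = (ε * ε ^ (2 * θ₀ - 2)) * C ^ 2 * I := by ring
                _ = C ^ 2 * ε ^ (2 * θ₀ - 1) * I := by rw [this]; ring
      -- conclude via rpow monotonicity
      have hL0 : 0 ≤ ∫ k : ℝ, ‖FT (multOp g u) k‖ ^ 2 * Real.exp (2 * (μ₁ / ε) * |k|) *
          (1 + k ^ 2) ^ m₁ := integral_nonneg fun k => by positivity
      unfold Hnorm
      calc (∫ k : ℝ, ‖FT (multOp g u) k‖ ^ 2 * Real.exp (2 * (μ₁ / ε) * |k|) *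
            (1 + k ^ 2) ^ m₁) ^ ((1:ℝ)/2)
          ≤ (C ^ 2 * ε ^ (2 * θ₀ - 1) * I) ^ ((1:ℝ)/2) :=
            Real.rpow_le_rpow hL0 hkey (by norm_num)
        _ = C * ε ^ (θ₀ - 1/2) * I ^ ((1:ℝ)/2) := by
            have hI0 : 0 ≤ I := hIH0
            have hCpow : ((C:ℝ) ^ 2) ^ ((1:ℝ)/2) = C := by
              rw [← Real.rpow_natCast C 2, ← Real.rpow_mul hC.le]
              rw [show (((2:ℕ):ℝ) * ((1:ℝ)/2)) = 1 by norm_num, Real.rpow_one]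
            have hεpow : (ε ^ (2 * θ₀ - 1)) ^ ((1:ℝ)/2) = ε ^ (θ₀ - 1/2) := by
              rw [← Real.rpow_mul hε.le]
              congr 1
              ring
            rw [Real.mul_rpow (by positivity) hI0,
              Real.mul_rpow (by positivity) (Real.rpow_nonneg hε.le _), hCpow, hεpow]
    · -- FT of a non-integrable function vanishes
      exact hzero fun k => ft_zero_of_not_integrable hv k
  · -- G is not integrable, so multOp g u vanishes identically
    have h0 : multOp g u = fun _ => (0:ℂ) := by
      funext k
      exact ftInv_zero_of_not_integrable hG k
    apply hzero
    intro k
    rw [show FT (multOp g u) = FT (fun _ => (0:ℂ)) by rw [h0]]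
    unfold FT
    rw [Real.fourier_eq]
    simp
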